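/- Let X be a type, let A = FreeAlgebra (ZMod 2) X, let D₁ and D₂ be ℤ/2-linear derivations of A, and let φ : A ≃ A be a ℤ/2-algebra automorphism satisfying φ(D₁ a) = D₂(φ a) for all a ∈ A. Let I₁ and I₂ be the two-sided ideals of A generated by {D₁(ι x) : x ∈ X} and {D₂(ι x) : x ∈ X} respectively. Then φ maps I₁ onto I₂, and consequently the quotient rings A/I₁ and A/I₂ are isomorphic as ℤ/2-algebras. -/

import Mathlib

/-- The quotient of a ℤ/2-algebra by a ring congruence is again a ℤ/2-algebra,
via the quotient map. -/
noncomputable instance ringConQuotientAlgebra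
    {R : Type*} [Ring R] [Algebra (ZMod 2) R] (c : RingCon R) :
    Algebra (ZMod 2) c.Quotient :=
  RingHom.toAlgebra' ((RingCon.mk' c).comp (algebraMap (ZMod 2) R)) (by
    intro r x
    show ((RingCon.mk' c).comp (algebraMap (ZMod 2) R)) r * x
      = x * ((RingCon.mk' c).comp (algebraMap (ZMod 2) R)) r
    rw [← ZMod.natCast_zmod_val r, map_natCast]
    exact (Nat.cast_commute _ x).eq)

theorem deriv_mem_span {X : Type*}
    (D : FreeAlgebra (ZMod 2) X →ₗ[ZMod 2] FreeAlgebra (ZMod 2) X)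
    (hD : ∀ a b : FreeAlgebra (ZMod 2) X, D (a * b) = D a * b + a * D b)
    (a : FreeAlgebra (ZMod 2) X) :
    D a ∈ TwoSidedIdeal.span (Set.range fun x : X => D (FreeAlgebra.ι (ZMod 2) x)) := by
  have h1 : D 1 = 0 := by
    have := hD 1 1
    simp only [mul_one, one_mul] at this
    have h' : D 1 - (D 1 + D 1) = 0 := by rw [← this]; simp
    rw [sub_add_eq_sub_sub, sub_self, zero_sub, neg_eq_zero] at h'
    exact h'
  induction a with
  | grade0 r =>
      have : algebraMap (ZMod 2) (FreeAlgebra (ZMod 2) X) r = r • 1 := by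
        rw [Algebra.algebraMap_eq_smul_one]
      rw [this, map_smul, h1, smul_zero]
      exact TwoSidedIdeal.zero_mem _
  | grade1 x => exact TwoSidedIdeal.subset_span ⟨x, rfl⟩
  | mul a b ha hb =>
      rw [hD]
      exact TwoSidedIdeal.add_mem _ (TwoSidedIdeal.mul_mem_right _ _ _ ha)
        (TwoSidedIdeal.mul_mem_left _ _ _ hb)
  | add a b ha hb =>
      rw [map_add]
      exact TwoSidedIdeal.add_mem _ ha hb

/-- An automorphism of a free ℤ/2-algebra intertwining two derivations maps the
two-sided ideal generated by the values of the first derivation on the generators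
onto the corresponding ideal for the second derivation, and consequently the
quotients (the characteristic algebras) are isomorphic ℤ/2-algebras. -/
theorem characteristic_algebra_invariance
    {X : Type*}
    (D₁ D₂ : FreeAlgebra (ZMod 2) X →ₗ[ZMod 2] FreeAlgebra (ZMod 2) X)
    (hD₁ : ∀ a b : FreeAlgebra (ZMod 2) X, D₁ (a * b) = D₁ a * b + a * D₁ b)
    (hD₂ : ∀ a b : FreeAlgebra (ZMod 2) X, D₂ (a * b) = D₂ a * b + a * D₂ b)
    (φ : FreeAlgebra (ZMod 2) X ≃ₐ[ZMod 2] FreeAlgebra (ZMod 2) X)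
    (hφ : ∀ a : FreeAlgebra (ZMod 2) X, φ (D₁ a) = D₂ (φ a)) :
    (⇑φ '' ((TwoSidedIdeal.span
        (Set.range fun x : X => D₁ (FreeAlgebra.ι (ZMod 2) x))) :
          Set (FreeAlgebra (ZMod 2) X))
      = ((TwoSidedIdeal.span
        (Set.range fun x : X => D₂ (FreeAlgebra.ι (ZMod 2) x))) :
          Set (FreeAlgebra (ZMod 2) X)))
    ∧ Nonempty
      ((TwoSidedIdeal.span
          (Set.range fun x : X => D₁ (FreeAlgebra.ι (ZMod 2) x))).ringCon.Quotient
        ≃ₐ[ZMod 2]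
       (TwoSidedIdeal.span
          (Set.range fun x : X => D₂ (FreeAlgebra.ι (ZMod 2) x))).ringCon.Quotient) := by
  set I₁ := TwoSidedIdeal.span (Set.range fun x : X => D₁ (FreeAlgebra.ι (ZMod 2) x)) with hI₁
  set I₂ := TwoSidedIdeal.span (Set.range fun x : X => D₂ (FreeAlgebra.ι (ZMod 2) x)) with hI₂
  have hφ' : ∀ a : FreeAlgebra (ZMod 2) X, φ.symm (D₂ a) = D₁ (φ.symm a) := by
    intro a
    apply φ.injective
    rw [hφ, AlgEquiv.apply_symm_apply, AlgEquiv.apply_symm_apply]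
  -- forward inclusion
  have fwd : ∀ a ∈ I₁, φ a ∈ I₂ := by
    intro a ha
    have : I₁ ≤ I₂.comap (φ : FreeAlgebra (ZMod 2) X →+* FreeAlgebra (ZMod 2) X) := by
      rw [hI₁]
      intro z hz
      refine TwoSidedIdeal.mem_span_iff.1 hz _ ?_
      rintro _ ⟨x, rfl⟩
      rw [SetLike.mem_coe, TwoSidedIdeal.mem_comap]
      show φ (D₁ (FreeAlgebra.ι (ZMod 2) x)) ∈ I₂
      rw [hφ]
      exact deriv_mem_span D₂ hD₂ _
    have := this ha
    rwa [TwoSidedIdeal.mem_comap] at this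
  have bwd : ∀ a ∈ I₂, φ.symm a ∈ I₁ := by
    intro a ha
    have : I₂ ≤ I₁.comap (φ.symm : FreeAlgebra (ZMod 2) X →+* FreeAlgebra (ZMod 2) X) := by
      rw [hI₂]
      intro z hz
      refine TwoSidedIdeal.mem_span_iff.1 hz _ ?_
      rintro _ ⟨x, rfl⟩
      rw [SetLike.mem_coe, TwoSidedIdeal.mem_comap]
      show φ.symm (D₂ (FreeAlgebra.ι (ZMod 2) x)) ∈ I₁
      rw [hφ']
      exact deriv_mem_span D₁ hD₁ _
    have := this ha
    rwa [TwoSidedIdeal.mem_comap] at this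
  have himg : ⇑φ '' (I₁ : Set (FreeAlgebra (ZMod 2) X)) = (I₂ : Set (FreeAlgebra (ZMod 2) X)) := by
    apply Set.Subset.antisymm
    · rintro _ ⟨a, ha, rfl⟩
      exact fwd a ha
    · intro b hb
      exact ⟨φ.symm b, bwd b hb, φ.apply_symm_apply b⟩
  refine ⟨himg, ?_⟩
  -- the relation is preserved
  have hrel : ∀ a b : FreeAlgebra (ZMod 2) X, I₁.ringCon a b ↔ I₂.ringCon (φ a) (φ b) := by
    intro a b
    rw [TwoSidedIdeal.rel_iff, TwoSidedIdeal.rel_iff, ← map_sub]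
    constructor
    · intro h; exact fwd _ h
    · intro h
      have := bwd _ h
      rwa [AlgEquiv.symm_apply_apply] at this
  -- build the equiv of quotients
  let e : I₁.ringCon.Quotient ≃ I₂.ringCon.Quotient :=
    Quotient.congr φ.toEquiv (fun a b => by
      exact hrel a b)
  refine ⟨{ toEquiv := e, map_mul' := ?_, map_add' := ?_, commutes' := ?_ }⟩
  · intro x y
    induction x using Quotient.ind with | _ a =>
    induction y using Quotient.ind with | _ b =>
    show (↑(φ (a * b)) : I₂.ringCon.Quotient) = ↑(φ a) * ↑(φ b)
    rw [map_mul]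
    exact RingCon.coe_mul _ _ _
  · intro x y
    induction x using Quotient.ind with | _ a =>
    induction y using Quotient.ind with | _ b =>
    show (↑(φ (a + b)) : I₂.ringCon.Quotient) = ↑(φ a) + ↑(φ b)
    rw [map_add]
    exact RingCon.coe_add _ _ _
  · intro r
    show e ((RingCon.mk' I₁.ringCon) (algebraMap (ZMod 2) _ r)) =
      (RingCon.mk' I₂.ringCon) (algebraMap (ZMod 2) _ r)
    have : e ((RingCon.mk' I₁.ringCon) (algebraMap (ZMod 2) _ r)) =
        (RingCon.mk' I₂.ringCon) (φ (algebraMap (ZMod 2) _ r)) := rfl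
    rw [this, AlgEquiv.commutes]
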